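/- Let P = [P_1 ... P_t] where each P_ℓ ∈ ℂ^{k×k} is unitary, and suppose every pair of columns p_i, p_j of P taken from different unitary blocks satisfies |p_i* p_j| = sqrt(r/n) where n = kr. Let Q ∈ ℂ^{r×r} be unitary and A = P ⊗ Q. Then μ(A) = max_{i≠j} ‖A_i* A_j‖₂ = sqrt(r/n), where A_i = p_i ⊗ Q, achieving the union-of-orthobases lower bound. -/

import Mathlib

open Matrix Finset

noncomputable def specNorm {α β : Type*} [Fintype α] [Fintype β] [DecidableEq β]
    (X : Matrix α β ℂ) : ℝ :=
  ‖LinearMap.toContinuousLinearMap (Matrix.toEuclideanLin X)‖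

/-- The Kronecker product `p ⊗ Q` of a column vector `p ∈ ℂ^k` with an `r × r`
matrix `Q`, viewed as a `(k·r) × r` matrix (rows indexed by `Fin k × Fin r`). -/
def kronBlock {k r : ℕ} (p : Fin k → ℂ) (Q : Matrix (Fin r) (Fin r) ℂ) :
    Matrix (Fin k × Fin r) (Fin r) ℂ :=
  fun st b => p st.1 * Q st.2 b

lemma specNorm_smul {α β : Type*} [Fintype α] [Fintype β] [DecidableEq β]
    (c : ℂ) (X : Matrix α β ℂ) : specNorm (c • X) = ‖c‖ * specNorm X := by
  unfold specNorm
  rw [_root_.map_smul, _root_.map_smul]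
  exact norm_smul c (LinearMap.toContinuousLinearMap (Matrix.toEuclideanLin X))

lemma specNorm_zero {α β : Type*} [Fintype α] [Fintype β] [DecidableEq β] :
    specNorm (0 : Matrix α β ℂ) = 0 := by
  unfold specNorm
  rw [_root_.map_zero, _root_.map_zero, norm_zero]

lemma specNorm_one {r : ℕ} (hr : 0 < r) :
    specNorm (1 : Matrix (Fin r) (Fin r) ℂ) = 1 := by
  have : Nontrivial (EuclideanSpace ℂ (Fin r)) := by
    haveI : Nonempty (Fin r) := ⟨⟨0, hr⟩⟩
    infer_instance
  have h1 : LinearMap.toContinuousLinearMap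
      (Matrix.toEuclideanLin (1 : Matrix (Fin r) (Fin r) ℂ)) =
      ContinuousLinearMap.id ℂ (EuclideanSpace ℂ (Fin r)) := by
    ext x i
    simp [Matrix.toEuclideanLin, Matrix.toLin'_one]
  rw [specNorm, h1, ContinuousLinearMap.norm_id]

lemma kron_mul {k r : ℕ} (p q : Fin k → ℂ) (Q : Matrix (Fin r) (Fin r) ℂ) :
    (kronBlock p Q)ᴴ * kronBlock q Q = (star p ⬝ᵥ q) • (Qᴴ * Q) := by
  ext a b
  simp only [mul_apply, conjTranspose_apply, kronBlock, Matrix.smul_apply, dotProduct,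
    smul_eq_mul, Pi.star_apply, star_mul']
  rw [Fintype.sum_prod_type, Finset.sum_mul_sum]
  refine Finset.sum_congr rfl fun s _ => Finset.sum_congr rfl fun u _ => ?_
  ring

/-- Kronecker product construction 2: if P is a union of t ≥ 2 unitary k×k bases whose
columns p ℓ c satisfy |⟨p ℓ c, p ℓ' c'⟩| = sqrt(r/n) (n = k·r) whenever ℓ ≠ ℓ', and Q is
r×r unitary, then A = P ⊗ Q, with blocks A_(ℓ,c) = p ℓ c ⊗ Q, has worst-case block
coherence μ(A) = sqrt(r/n). -/
theorem stmt18 (k r t : ℕ) (hk : 0 < k) (hr : 0 < r) (ht : 2 ≤ t)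
    (p : Fin t → Fin k → (Fin k → ℂ))
    (Q : Matrix (Fin r) (Fin r) ℂ) (hQ : Qᴴ * Q = 1)
    (hbases : ∀ ℓ, (Matrix.of (fun a c => p ℓ c a) : Matrix (Fin k) (Fin k) ℂ)ᴴ *
        Matrix.of (fun a c => p ℓ c a) = 1)
    (hcross : ∀ ℓ ℓ' c c', ℓ ≠ ℓ' →
      ‖star (p ℓ c) ⬝ᵥ p ℓ' c'‖ = Real.sqrt ((r : ℝ) / ((k * r : ℕ) : ℝ)))
    (hne : (Finset.univ.filter
      (fun pr : (Fin t × Fin k) × (Fin t × Fin k) => pr.1 ≠ pr.2)).Nonempty) :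
    (Finset.univ.filter
      (fun pr : (Fin t × Fin k) × (Fin t × Fin k) => pr.1 ≠ pr.2)).sup' hne
      (fun pr => specNorm
        ((kronBlock (p pr.1.1 pr.1.2) Q)ᴴ * kronBlock (p pr.2.1 pr.2.2) Q)) =
      Real.sqrt ((r : ℝ) / ((k * r : ℕ) : ℝ)) := by
  set μ : ℝ := Real.sqrt ((r : ℝ) / ((k * r : ℕ) : ℝ)) with hμ
  have hμ0 : 0 ≤ μ := Real.sqrt_nonneg _
  -- value of each term
  have hval : ∀ ℓ ℓ' c c',
      specNorm ((kronBlock (p ℓ c) Q)ᴴ * kronBlock (p ℓ' c') Q) =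
        ‖star (p ℓ c) ⬝ᵥ p ℓ' c'‖ := by
    intro ℓ ℓ' c c'
    rw [kron_mul, hQ, specNorm_smul, specNorm_one hr, mul_one]
  apply le_antisymm
  · apply Finset.sup'_le
    rintro ⟨⟨ℓ, c⟩, ⟨ℓ', c'⟩⟩ hmem
    simp only [Finset.mem_filter, Finset.mem_univ, true_and, ne_eq] at hmem
    rw [hval]
    rcases eq_or_ne ℓ ℓ' with hll | hll
    · subst hll
      have hcc : c ≠ c' := fun h => hmem (by simp [h])
      have := hbases ℓ
      have h0 : star (p ℓ c) ⬝ᵥ p ℓ c' = 0 := by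
        have := congrArg (fun M => M c c') (hbases ℓ)
        simpa [Matrix.mul_apply, Matrix.one_apply, hcc, dotProduct,
          Matrix.conjTranspose_apply, mul_comm] using this
      rw [h0, norm_zero]; exact hμ0
    · exact le_of_eq (hcross ℓ ℓ' c c' hll)
  · -- witness: ℓ = 0, ℓ' = 1
    have h01 : (⟨0, by omega⟩ : Fin t) ≠ ⟨1, by omega⟩ := by
      simp [Fin.ext_iff]
    have hmem : ((⟨⟨0, by omega⟩, ⟨0, hk⟩⟩, ⟨⟨1, by omega⟩, ⟨0, hk⟩⟩) :
        (Fin t × Fin k) × (Fin t × Fin k)) ∈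
        (Finset.univ.filter
          (fun pr : (Fin t × Fin k) × (Fin t × Fin k) => pr.1 ≠ pr.2)) := by
      simp [Prod.ext_iff, Fin.ext_iff]
    refine le_trans ?_ (Finset.le_sup' _ hmem)
    rw [hval, hcross _ _ _ _ h01]
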